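/- For fixed positive reals a and b, the pointwise α-divergence integrand satisfies the limit: (α a + (1−α) b − a^α b^{1−α})/(α(1−α)) → a·log(a/b) + b − a as α → 1. -/

import Mathlib

open Real Filter Topology

/-- The pointwise α-divergence integrand tends to the KL integrand as α → 1. -/
theorem alpha_integrand_tendsto_one (a b : ℝ) (ha : 0 < a) (hb : 0 < b) :
    Tendsto (fun α : ℝ => (α * a + (1 - α) * b - a ^ α * b ^ (1 - α)) / (α * (1 - α)))
      (𝓝[≠] 1) (𝓝 (a * Real.log (a / b) + b - a)) := by
  set g : ℝ → ℝ := fun α => α * a + (1 - α) * b - a ^ α * b ^ (1 - α) with hg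
  have hderiv : HasDerivAt g (a - b - (a * Real.log a - a * Real.log b)) 1 := by
    have h1 : HasDerivAt (fun α : ℝ => a ^ α) (a ^ (1:ℝ) * Real.log a) 1 :=
      (Real.hasStrictDerivAt_const_rpow ha 1).hasDerivAt
    have hinner : HasDerivAt (fun α : ℝ => 1 - α) (-1) 1 := by
      simpa using (hasDerivAt_id' (1:ℝ)).const_sub (1:ℝ)
    have h2 : HasDerivAt (fun α : ℝ => b ^ (1 - α)) (b ^ ((1:ℝ) - 1) * Real.log b * (-1)) 1 :=
      ((Real.hasStrictDerivAt_const_rpow hb ((1:ℝ) - 1)).hasDerivAt).comp 1 hinner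
    have h3 : HasDerivAt (fun α : ℝ => α * a) a 1 := by
      simpa using (hasDerivAt_id (1:ℝ)).mul_const a
    have h4 : HasDerivAt (fun α : ℝ => (1 - α) * b) (-b) 1 := by
      simpa using hinner.mul_const b
    have h5 : HasDerivAt g _ 1 := (h3.add h4).sub (h1.mul h2)
    convert h5 using 1
    simp [Real.rpow_one]
    ring
  have hslope : Tendsto (slope g 1) (𝓝[≠] 1) (𝓝 (a - b - (a * Real.log a - a * Real.log b))) :=
    hasDerivAt_iff_tendsto_slope.mp hderiv
  have hinv : Tendsto (fun α : ℝ => α⁻¹) (𝓝[≠] 1) (𝓝 1) := by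
    have : Tendsto (fun α : ℝ => α⁻¹) (𝓝 1) (𝓝 1) := by
      simpa using (continuousAt_inv₀ (one_ne_zero : (1:ℝ) ≠ 0)).tendsto
    exact this.mono_left nhdsWithin_le_nhds
  have hmain : Tendsto (fun α : ℝ => -slope g 1 α * α⁻¹) (𝓝[≠] 1)
      (𝓝 (-(a - b - (a * Real.log a - a * Real.log b)) * 1)) :=
    hslope.neg.mul hinv
  have heq : (fun α : ℝ => -slope g 1 α * α⁻¹) =ᶠ[𝓝[≠] 1]
      (fun α : ℝ => (α * a + (1 - α) * b - a ^ α * b ^ (1 - α)) / (α * (1 - α))) := by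
    have h0 : ∀ᶠ α in 𝓝[≠] (1:ℝ), α ≠ 0 := by
      filter_upwards [nhdsWithin_le_nhds (eventually_ne_nhds one_ne_zero)] with α hα using hα
    filter_upwards [h0, self_mem_nhdsWithin] with α hα0 (hα1 : α ≠ 1)
    have hg1 : g 1 = 0 := by
      simp [hg, Real.rpow_one, Real.rpow_zero]
    rw [slope_def_field, hg1]
    simp only [hg]
    have hα1' : α - 1 ≠ 0 := sub_ne_zero.mpr hα1
    field_simp [hα0, hα1', sub_ne_zero.mpr (Ne.symm hα1)]
    ring
  have : Tendsto (fun α : ℝ => (α * a + (1 - α) * b - a ^ α * b ^ (1 - α)) / (α * (1 - α)))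
      (𝓝[≠] 1) (𝓝 (-(a - b - (a * Real.log a - a * Real.log b)) * 1)) :=
    hmain.congr' heq
  convert this using 2
  rw [Real.log_div ha.ne' hb.ne']
  ring
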